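/- For every natural number m and every twice differentiable function f on I, the factorization (H_m f)(s) − λ_m f(s) = (A_m^+ (A_m f))(s) holds for all s in I. -/

import Mathlib

/-- For every `m : ℕ` and every twice differentiable function `f`
on the nonempty open interval `I` (on which `σ > 0`), the factorization
`H_m f - λ_m f = A_m^+ (A_m f)` holds on `I`, where
`A_m f = κ f' - m κ' f`, `A_m^+ f = -κ f' - (τ/κ) f - (m-1) κ' f`, and
`H_m f = -σ f'' - τ f' + [m(m-2)σ'²/(4σ) + mτσ'/(2σ) - m(m-2)σ''/2 - mτ'] f`. -/
theorem factorization_Hm_eq_Am_plus_Am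
    (a b c d e : ℝ) (σ τ : ℝ → ℝ)
    (hσ : ∀ s, σ s = a * s ^ 2 + b * s + c)
    (hτ : ∀ s, τ s = d * s + e)
    (lam : ℕ → ℝ)
    (hlam : ∀ j : ℕ, lam j = -(j : ℝ) * ((j : ℝ) - 1) * a - (j : ℝ) * d)
    (I : Set ℝ) (hI : IsOpen I) (hIne : I.Nonempty) (hIconn : I.OrdConnected)
    (hσpos : ∀ s ∈ I, 0 < σ s)
    (κ : ℝ → ℝ) (hκ : ∀ s, κ s = Real.sqrt (σ s))
    (m : ℕ) (f : ℝ → ℝ) (hf : ContDiffOn ℝ 2 f I)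
    (Af : ℝ → ℝ) (hAf : ∀ s, Af s = κ s * deriv f s - (m : ℝ) * deriv κ s * f s) :
    ∀ s ∈ I,
      (-σ s * deriv (deriv f) s - τ s * deriv f s
          + ((m : ℝ) * ((m : ℝ) - 2) * (2 * a * s + b) ^ 2 / (4 * σ s)
              + (m : ℝ) * τ s * (2 * a * s + b) / (2 * σ s)
              - (m : ℝ) * ((m : ℝ) - 2) * (2 * a) / 2
              - (m : ℝ) * d) * f s)
        - lam m * f s
      = -κ s * deriv Af s - (τ s / κ s) * Af s - ((m : ℝ) - 1) * deriv κ s * Af s := by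
  intro s hs
  have hσs : 0 < σ s := hσpos s hs
  have hκpos : 0 < κ s := by rw [hκ s]; exact Real.sqrt_pos.mpr hσs
  have hκne : κ s ≠ 0 := ne_of_gt hκpos
  have hκsq : κ s ^ 2 = σ s := by rw [hκ s]; exact Real.sq_sqrt hσs.le
  -- derivative of σ
  have hσd : ∀ t : ℝ, HasDerivAt σ (2 * a * t + b) t := by
    intro t
    have hfun : σ = fun x => a * x ^ 2 + b * x + c := funext hσ
    rw [hfun]
    have h1 : HasDerivAt (fun x : ℝ => a * x ^ 2 + b * x + c) (a * (2 * t) + b) t := by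
      simpa using
        ((((hasDerivAt_pow 2 t).const_mul a).add ((hasDerivAt_id t).const_mul b)).add_const c)
    convert h1 using 1
    ring
  -- derivative of κ on I
  have hκd : ∀ t ∈ I, HasDerivAt κ ((2 * a * t + b) / (2 * κ t)) t := by
    intro t ht
    have h1 := (hσd t).sqrt (ne_of_gt (hσpos t ht))
    have hfun : κ = fun x => Real.sqrt (σ x) := funext hκ
    rw [hfun]
    simpa using h1
  have hκderiv : ∀ t ∈ I, deriv κ t = (2 * a * t + b) / (2 * κ t) := fun t ht =>
    (hκd t ht).deriv
  -- second derivative ingredient : deriv κ has a derivative at s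
  set k1 : ℝ := (2 * a * s + b) / (2 * κ s) with hk1
  set k2 : ℝ := (2 * a * (2 * κ s) - (2 * a * s + b) * (2 * k1)) / (2 * κ s) ^ 2 with hk2
  have hgd : HasDerivAt (fun t => (2 * a * t + b) / (2 * κ t)) k2 s := by
    have hnum : HasDerivAt (fun t : ℝ => 2 * a * t + b) (2 * a) s := by
      have := ((hasDerivAt_id s).const_mul (2 * a)).add_const b
      simpa using this
    have hden : HasDerivAt (fun t : ℝ => 2 * κ t) (2 * k1) s :=
      (hκd s hs).const_mul 2
    have hdenne : 2 * κ s ≠ 0 := by positivity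
    simpa [hk2] using hnum.fun_div hden hdenne
  have hκ'd : HasDerivAt (deriv κ) k2 s := by
    apply hgd.congr_of_eventuallyEq
    filter_upwards [hI.mem_nhds hs] with t ht
    exact hκderiv t ht
  -- derivatives of f
  have hfd : HasDerivAt f (deriv f s) s :=
    (hf.differentiableOn (by norm_num) s hs).differentiableAt
      (hI.mem_nhds hs) |>.hasDerivAt
  have hf'cd : ContDiffOn ℝ 1 (deriv f) I := by
    have := hf.deriv_of_isOpen hI (m := 1) (by norm_num)
    exact this
  have hf'd : HasDerivAt (deriv f) (deriv (deriv f) s) s :=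
    ((hf'cd.differentiableOn one_ne_zero s hs).differentiableAt
      (hI.mem_nhds hs)).hasDerivAt
  -- derivative of Af at s
  have hAfd : HasDerivAt Af
      ((k1 * deriv f s + κ s * deriv (deriv f) s)
        - (m : ℝ) * (k2 * f s + k1 * deriv f s)) s := by
    have hAfun : Af = fun t => κ t * deriv f t - (m : ℝ) * deriv κ t * f t :=
      funext hAf
    rw [hAfun]
    have h1 : HasDerivAt (fun t => κ t * deriv f t)
        (k1 * deriv f s + κ s * deriv (deriv f) s) s := (hκd s hs).mul hf'd
    have h2 : HasDerivAt (fun t => (m : ℝ) * deriv κ t * f t)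
        ((m : ℝ) * k2 * f s + (m : ℝ) * deriv κ s * deriv f s) s :=
      (hκ'd.const_mul (m : ℝ)).mul hfd
    have h3 := h1.fun_sub h2
    rw [hκderiv s hs] at h3
    refine h3.congr_deriv ?_
    ring
  rw [hAfd.deriv, hAf s, hκderiv s hs, hlam m, ← hk1, ← hκsq]
  rw [hk2, hk1]
  field_simp [hκne]
  ring
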